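/- Let (K_n), n ∈ ℕ, be nonempty compact convex subsets of real normed vector spaces E_n, and let f_n, f'_n : K_{n+1} → K_n be two sequences of continuous affine 1-Lipschitz maps satisfying Σ_{n=0}^∞ d_∞(f_n, f'_n) < ∞, where d_∞ is the uniform distance. Let K = {x ∈ Π_n K_n : f_n(x_{n+1}) = x_n for all n} and K' = {x ∈ Π_n K_n : f'_n(x_{n+1}) = x_n for all n}, with the product topology. Then there exists an affine homeomorphism ρ : K → K', i.e. a bijective homeomorphism satisfying ρ(λx + (1−λ)y) = λρ(x) + (1−λ)ρ(y) for all x, y ∈ K and λ ∈ [0,1]. -/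

import Mathlib

set_option linter.unusedSectionVars false
set_option linter.unusedVariables false

open Filter Topology Set

namespace Stmt1Aux

variable {E : ℕ → Type*} [∀ n, NormedAddCommGroup (E n)] [∀ n, NormedSpace ℝ (E n)]

/-- Iterated composition of connecting maps. -/
def icomp (g : ∀ n, E (n + 1) → E n) (n : ℕ) : ∀ m : ℕ, E (n + m) → E n
  | 0 => id
  | m + 1 => fun z => icomp g n m (g (n + m) z)

variable (g : ∀ n, E (n + 1) → E n) {K : ∀ n, Set (E n)}

lemma icomp_mapsTo (hg : ∀ n, Set.MapsTo (g n) (K (n + 1)) (K n)) (n : ℕ) :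
    ∀ m, Set.MapsTo (icomp g n m) (K (n + m)) (K n) := by
  intro m
  induction m with
  | zero => exact fun z hz => hz
  | succ m ih => exact fun z hz => ih (hg (n + m) hz)

lemma icomp_dist (hg : ∀ n, Set.MapsTo (g n) (K (n + 1)) (K n))
    (hgl : ∀ n, ∀ z ∈ K (n + 1), ∀ w ∈ K (n + 1), dist (g n z) (g n w) ≤ dist z w)
    (n : ℕ) : ∀ m, ∀ z ∈ K (n + m), ∀ w ∈ K (n + m),
      dist (icomp g n m z) (icomp g n m w) ≤ dist z w := by
  intro m
  induction m with
  | zero => exact fun z _ w _ => le_rfl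
  | succ m ih =>
    intro z hz w hw
    exact (ih _ (hg _ hz) _ (hg _ hw)).trans (hgl _ _ hz _ hw)

lemma icomp_continuousOn (hg : ∀ n, Set.MapsTo (g n) (K (n + 1)) (K n))
    (hgc : ∀ n, ContinuousOn (g n) (K (n + 1))) (n : ℕ) :
    ∀ m, ContinuousOn (icomp g n m) (K (n + m)) := by
  intro m
  induction m with
  | zero => exact continuousOn_id
  | succ m ih => exact ih.comp (hgc (n + m)) (hg (n + m))

lemma icomp_affine (hg : ∀ n, Set.MapsTo (g n) (K (n + 1)) (K n))
    (hga : ∀ n, ∀ x ∈ K (n + 1), ∀ y ∈ K (n + 1), ∀ a b : ℝ, 0 ≤ a → 0 ≤ b → a + b = 1 →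
      g n (a • x + b • y) = a • g n x + b • g n y)
    (n : ℕ) : ∀ m, ∀ z ∈ K (n + m), ∀ w ∈ K (n + m), ∀ a b : ℝ,
      0 ≤ a → 0 ≤ b → a + b = 1 →
      icomp g n m (a • z + b • w) = a • icomp g n m z + b • icomp g n m w := by
  intro m
  induction m with
  | zero => intro z _ w _ a b _ _ _; rfl
  | succ m ih =>
    intro z hz w hw a b ha hb hab
    show icomp g n m (g (n + m) (a • z + b • w)) =
      a • icomp g n m (g (n + m) z) + b • icomp g n m (g (n + m) w)
    rw [hga (n + m) z hz w hw a b ha hb hab]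
    exact ih _ (hg _ hz) _ (hg _ hw) a b ha hb hab

lemma icomp_fix (x : ∀ k, E k) (hx : ∀ n, g n (x (n + 1)) = x n) (n : ℕ) :
    ∀ m, icomp g n m (x (n + m)) = x n := by
  intro m
  induction m with
  | zero => rfl
  | succ m ih =>
    show icomp g n m (g (n + m) (x (n + m + 1))) = x n
    rw [hx (n + m)]; exact ih

lemma cast_apply (x : ∀ k, E k) {a b : ℕ} (h : a = b) :
    cast (congrArg E h) (x a) = x b := by subst h; rfl

lemma cast_g {a b : ℕ} (h : a = b) (z : E (a + 1)) :
    g b (cast (congrArg E (congrArg Nat.succ h)) z) = cast (congrArg E h) (g a z) := by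
  subst h; rfl

lemma icomp_succ_left (n : ℕ) : ∀ m (z : E (n + 1 + m)),
    g n (icomp g (n + 1) m z) =
      icomp g n (m + 1) (cast (congrArg E (Nat.add_right_comm n 1 m)) z) := by
  intro m
  induction m with
  | zero => intro z; rfl
  | succ m ih =>
    intro z
    show g n (icomp g (n + 1) m (g (n + 1 + m) z)) =
      icomp g n (m + 1) (g (n + m + 1) (cast (congrArg E (Nat.add_right_comm n 1 (m + 1))) z))
    rw [ih (g (n + 1 + m) z)]
    congr 1
    exact (cast_g g (Nat.add_right_comm n 1 m) z).symm

lemma icomp_succ_left_apply (x : ∀ k, E k) (n m : ℕ) :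
    g n (icomp g (n + 1) m (x (n + 1 + m))) = icomp g n (m + 1) (x (n + m + 1)) := by
  rw [icomp_succ_left g n m (x (n + 1 + m))]
  congr 1
  exact cast_apply x (Nat.add_right_comm n 1 m)

end Stmt1Aux

section KeyPart
open Filter Topology Set Stmt1Aux

variable {E : ℕ → Type*} [∀ n, NormedAddCommGroup (E n)] [∀ n, NormedSpace ℝ (E n)]

lemma stmt1_key (K : ∀ n, Set (E n))
    (hKcp : ∀ n, IsCompact (K n)) (hKcv : ∀ n, Convex ℝ (K n))
    (g g' : ∀ n, E (n + 1) → E n)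
    (hg' : ∀ n, Set.MapsTo (g' n) (K (n + 1)) (K n))
    (hg'c : ∀ n, ContinuousOn (g' n) (K (n + 1)))
    (hg'l : ∀ n, ∀ z ∈ K (n + 1), ∀ w ∈ K (n + 1), dist (g' n z) (g' n w) ≤ dist z w)
    (hg'a : ∀ n, ∀ x ∈ K (n + 1), ∀ y ∈ K (n + 1), ∀ a b : ℝ, 0 ≤ a → 0 ≤ b → a + b = 1 →
      g' n (a • x + b • y) = a • g' n x + b • g' n y)
    (ε : ℕ → ℝ) (hεs : Summable ε)
    (hε : ∀ n, ∀ x ∈ K (n + 1), dist (g n x) (g' n x) ≤ ε n) :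
    ∃ ρ : ({x : ∀ n, E n | (∀ n, x n ∈ K n) ∧ ∀ n, g n (x (n + 1)) = x n} : Set (∀ n, E n)) →
          ({x : ∀ n, E n | (∀ n, x n ∈ K n) ∧ ∀ n, g' n (x (n + 1)) = x n} : Set (∀ n, E n)),
      Continuous ρ ∧
      (∀ x n, Filter.Tendsto (fun m => icomp g' n m (x.1 (n + m))) atTop (𝓝 ((ρ x).1 n))) ∧
      (∀ x n, dist ((ρ x).1 n) (x.1 n) ≤ ∑' k, ε (k + n)) ∧
      (∀ x y z, ∀ a b : ℝ, 0 ≤ a → 0 ≤ b → a + b = 1 →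
        z.1 = (fun n => a • x.1 n + b • y.1 n) →
        (ρ z).1 = fun n => a • (ρ x).1 n + b • (ρ y).1 n) := by
  set S : Set (∀ n, E n) := {x | (∀ n, x n ∈ K n) ∧ ∀ n, g n (x (n + 1)) = x n} with hS
  -- the one-step distance estimate
  have hstep : ∀ (x : S) (n m : ℕ),
      dist (icomp g' n m (x.1 (n + m))) (icomp g' n (m + 1) (x.1 (n + (m + 1)))) ≤ ε (n + m) := by
    intro x n m
    show dist (icomp g' n m (x.1 (n + m))) (icomp g' n m (g' (n + m) (x.1 (n + m + 1)))) ≤ ε (n + m)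
    have hmem1 : x.1 (n + m + 1) ∈ K (n + m + 1) := x.2.1 _
    have hxe : x.1 (n + m) = g (n + m) (x.1 (n + m + 1)) := (x.2.2 (n + m)).symm
    rw [hxe]
    exact (icomp_dist g' hg' hg'l n m _ (hxe ▸ x.2.1 (n + m)) _ (hg' _ hmem1)).trans
      (hε (n + m) _ hmem1)
  have hεshift : ∀ n, Summable (fun m => ε (n + m)) := by
    intro n
    have := (summable_nat_add_iff n).mpr hεs
    simpa [add_comm] using this
  have exlim : ∀ (x : S) (n : ℕ), ∃ L ∈ K n,
      Filter.Tendsto (fun m => icomp g' n m (x.1 (n + m))) atTop (𝓝 L) := by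
    intro x n
    exact cauchySeq_tendsto_of_isComplete (hKcp n).isComplete
      (fun m => icomp_mapsTo g' hg' n m (x.2.1 (n + m)))
      (cauchySeq_of_dist_le_of_summable (fun m => ε (n + m)) (hstep x n) (hεshift n))
  choose L hLmem hLt using exlim
  have hdistb : ∀ (x : S) n m, dist (icomp g' n m (x.1 (n + m))) (L x n) ≤ ∑' k, ε (k + (n + m)) := by
    intro x n m
    have h := dist_le_tsum_of_dist_le_of_tendsto (fun m => ε (n + m)) (hstep x n)
      (hεshift n) (hLt x n) m
    refine h.trans_eq (Eq.symm ?_)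
    exact tsum_congr fun j => congrArg ε (by omega)
  have hdist0 : ∀ (x : S) n, dist ((L x) n) (x.1 n) ≤ ∑' k, ε (k + n) := by
    intro x n
    have := hdistb x n 0
    rw [dist_comm]
    exact this
  -- the tail of the series tends to zero
  have hδtail : ∀ n : ℕ, Filter.Tendsto (fun m => ∑' k, ε (k + (n + m))) atTop (𝓝 0) := by
    intro n
    have h1 : Filter.Tendsto (fun m : ℕ => n + m) atTop atTop := by
      simpa [add_comm] using tendsto_add_atTop_nat n
    exact (tendsto_sum_nat_add ε).comp h1
  -- compatibility of the limit with g'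
  have hfix : ∀ (x : S) n, g' n (L x (n + 1)) = L x n := by
    intro x n
    have h1 : Filter.Tendsto (fun m => g' n (icomp g' (n + 1) m (x.1 (n + 1 + m)))) atTop
        (𝓝 (g' n (L x (n + 1)))) := by
      have hcw : ContinuousWithinAt (g' n) (K (n + 1)) (L x (n + 1)) :=
        (hg'c n) _ (hLmem x (n + 1))
      refine hcw.tendsto.comp ?_
      exact tendsto_nhdsWithin_of_tendsto_nhds_of_eventually_within _ (hLt x (n + 1))
        (Filter.Eventually.of_forall fun m => icomp_mapsTo g' hg' (n + 1) m (x.2.1 _))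
    have h3 : (fun m => g' n (icomp g' (n + 1) m (x.1 (n + 1 + m)))) =
        fun m => icomp g' n (m + 1) (x.1 (n + m + 1)) :=
      funext fun m => icomp_succ_left_apply g' x.1 n m
    rw [h3] at h1
    have h2 : Filter.Tendsto (fun m => icomp g' n (m + 1) (x.1 (n + m + 1))) atTop
        (𝓝 (L x n)) := (hLt x n).comp (tendsto_add_atTop_nat 1)
    exact tendsto_nhds_unique h1 h2
  refine ⟨fun x => ⟨L x, ⟨fun n => hLmem x n, hfix x⟩⟩, ?_, fun x n => hLt x n, hdist0, ?_⟩
  · -- continuity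
    apply Continuous.subtype_mk
    apply continuous_pi
    intro n
    have hGc : ∀ m, Continuous (fun x : S => icomp g' n m (x.1 (n + m))) := by
      intro m
      exact (icomp_continuousOn g' hg' hg'c n m).comp_continuous
        ((continuous_apply (n + m)).comp continuous_subtype_val) (fun x => x.2.1 (n + m))
    have hunif : TendstoUniformly (fun m (x : S) => icomp g' n m (x.1 (n + m)))
        (fun x => L x n) atTop := by
      rw [Metric.tendstoUniformly_iff]
      intro t ht
      have hev : ∀ᶠ m in atTop, (∑' k, ε (k + (n + m))) < t :=
        (hδtail n).eventually_lt_const ht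
      filter_upwards [hev] with m hm x
      exact lt_of_le_of_lt (by rw [dist_comm]; exact hdistb x n m) hm
    exact hunif.continuous (Filter.Eventually.of_forall hGc).frequently
  · -- affinity
    intro x y z a b ha hb hab hz
    funext n
    have h1 := hLt z n
    have h2 : (fun m => icomp g' n m (z.1 (n + m))) =
        fun m => a • icomp g' n m (x.1 (n + m)) + b • icomp g' n m (y.1 (n + m)) := by
      funext m
      rw [hz]
      exact icomp_affine g' hg' hg'a n m _ (x.2.1 _) _ (y.2.1 _) a b ha hb hab
    rw [h2] at h1
    have h3 : Filter.Tendsto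
        (fun m => a • icomp g' n m (x.1 (n + m)) + b • icomp g' n m (y.1 (n + m))) atTop
        (𝓝 (a • L x n + b • L y n)) := ((hLt x n).const_smul a).add ((hLt y n).const_smul b)
    exact tendsto_nhds_unique h1 h3

end KeyPart


open Filter Topology Set Stmt1Aux

/-- If two sequences of contractive continuous affine connecting maps `f_n, f'_n` between the
same compact convex sets satisfy `Σ_n d_∞(f_n, f'_n) < ∞`, then the corresponding inverse
limits are affinely homeomorphic. -/
theorem stmt_1
    (E : ℕ → Type*)
    [∀ n, NormedAddCommGroup (E n)] [∀ n, NormedSpace ℝ (E n)]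
    (K : ∀ n, Set (E n))
    (hKne : ∀ n, (K n).Nonempty) (hKcp : ∀ n, IsCompact (K n)) (hKcv : ∀ n, Convex ℝ (K n))
    (f f' : ∀ n, E (n + 1) → E n)
    (hf : ∀ n, Set.MapsTo (f n) (K (n + 1)) (K n))
    (hf' : ∀ n, Set.MapsTo (f' n) (K (n + 1)) (K n))
    (hfc : ∀ n, ContinuousOn (f n) (K (n + 1)))
    (hf'c : ∀ n, ContinuousOn (f' n) (K (n + 1)))
    (hfl : ∀ n, LipschitzOnWith 1 (f n) (K (n + 1)))
    (hf'l : ∀ n, LipschitzOnWith 1 (f' n) (K (n + 1)))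
    (hfa : ∀ n, ∀ x ∈ K (n + 1), ∀ y ∈ K (n + 1), ∀ a b : ℝ, 0 ≤ a → 0 ≤ b → a + b = 1 →
      f n (a • x + b • y) = a • f n x + b • f n y)
    (hf'a : ∀ n, ∀ x ∈ K (n + 1), ∀ y ∈ K (n + 1), ∀ a b : ℝ, 0 ≤ a → 0 ≤ b → a + b = 1 →
      f' n (a • x + b • y) = a • f' n x + b • f' n y)
    (hsum : Summable (fun n => ⨆ x : K (n + 1), dist (f n x) (f' n x))) :
    ∀ (Klim K'lim : Set (∀ n, E n)),
      Klim = {x | (∀ n, x n ∈ K n) ∧ ∀ n, f n (x (n + 1)) = x n} →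
      K'lim = {x | (∀ n, x n ∈ K n) ∧ ∀ n, f' n (x (n + 1)) = x n} →
      ∃ h : Klim ≃ₜ K'lim,
        ∀ (x y : Klim) (a b : ℝ), 0 ≤ a → 0 ≤ b → a + b = 1 →
          ∀ hmem : (fun n => a • (x : ∀ n, E n) n + b • (y : ∀ n, E n) n) ∈ Klim,
            ((h ⟨_, hmem⟩ : ∀ n, E n)) =
              fun n => a • (h x : ∀ n, E n) n + b • (h y : ∀ n, E n) n := by
  intro Klim K'lim hK hK'
  subst hK hK'
  set ε : ℕ → ℝ := fun n => ⨆ x : K (n + 1), dist (f n x) (f' n x) with hεdef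
  have hbound : ∀ n, ∀ x ∈ K (n + 1), dist (f n x) (f' n x) ≤ ε n := by
    intro n x hx
    have hbdd : BddAbove (Set.range fun y : K (n + 1) => dist (f n y) (f' n y)) := by
      have h1 : BddAbove ((fun z => dist (f n z) (f' n z)) '' (K (n + 1))) :=
        (hKcp (n + 1)).bddAbove_image (by have := continuous_dist.comp_continuousOn (ContinuousOn.prodMk (hfc n) (hf'c n)); exact this)
      rwa [Set.image_eq_range] at h1
    exact le_ciSup hbdd ⟨x, hx⟩
  have hlip : ∀ (g : ∀ n, E (n + 1) → E n), (∀ n, LipschitzOnWith 1 (g n) (K (n + 1))) →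
      ∀ n, ∀ z ∈ K (n + 1), ∀ w ∈ K (n + 1), dist (g n z) (g n w) ≤ dist z w := by
    intro g hg n z hz w hw
    simpa using (hg n).dist_le_mul z hz w hw
  obtain ⟨ρ, hρc, hρt, hρd, hρa⟩ :=
    stmt1_key K hKcp hKcv f f' hf' hf'c (hlip f' hf'l) hf'a ε hsum hbound
  obtain ⟨σ, hσc, hσt, hσd, hσa⟩ :=
    stmt1_key K hKcp hKcv f' f hf hfc (hlip f hfl) hfa ε hsum
      (fun n x hx => (dist_comm (f n x) (f' n x)) ▸ hbound n x hx)
  -- tail tends to zero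
  have hδtail : ∀ n : ℕ, Filter.Tendsto (fun m => ∑' k, ε (k + (n + m))) atTop (𝓝 0) := by
    intro n
    have h1 : Filter.Tendsto (fun m : ℕ => n + m) atTop atTop := by
      simpa [add_comm] using tendsto_add_atTop_nat n
    exact (tendsto_sum_nat_add ε).comp h1
  have key_inv : ∀ (g g' : ∀ n, E (n + 1) → E n)
      (hg : ∀ n, Set.MapsTo (g n) (K (n + 1)) (K n))
      (hgl : ∀ n, ∀ z ∈ K (n + 1), ∀ w ∈ K (n + 1), dist (g n z) (g n w) ≤ dist z w)
      (ρ' : ({x : ∀ n, E n | (∀ n, x n ∈ K n) ∧ ∀ n, g n (x (n + 1)) = x n} : Set (∀ n, E n)) →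
            ({x : ∀ n, E n | (∀ n, x n ∈ K n) ∧ ∀ n, g' n (x (n + 1)) = x n} : Set (∀ n, E n)))
      (σ' : ({x : ∀ n, E n | (∀ n, x n ∈ K n) ∧ ∀ n, g' n (x (n + 1)) = x n} : Set (∀ n, E n)) →
            ({x : ∀ n, E n | (∀ n, x n ∈ K n) ∧ ∀ n, g n (x (n + 1)) = x n} : Set (∀ n, E n))),
      (∀ x n, Filter.Tendsto (fun m => icomp g n m (x.1 (n + m))) atTop (𝓝 ((σ' x).1 n))) →
      (∀ x n, dist ((ρ' x).1 n) (x.1 n) ≤ ∑' k, ε (k + n)) →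
      ∀ x, σ' (ρ' x) = x := by
    intro g g' hg hgl ρ' σ' hσ't hρ'd x
    apply Subtype.ext
    funext n
    have h1 := hσ't (ρ' x) n
    have h2 : Filter.Tendsto (fun m => icomp g n m ((ρ' x).1 (n + m))) atTop (𝓝 (x.1 n)) := by
      rw [tendsto_iff_dist_tendsto_zero]
      refine squeeze_zero (fun m => dist_nonneg) (fun m => ?_) (hδtail n)
      calc dist (icomp g n m ((ρ' x).1 (n + m))) (x.1 n)
          = dist (icomp g n m ((ρ' x).1 (n + m))) (icomp g n m (x.1 (n + m))) := by
            rw [icomp_fix g x.1 x.2.2 n m]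
        _ ≤ dist ((ρ' x).1 (n + m)) (x.1 (n + m)) :=
            icomp_dist g hg hgl n m _ ((ρ' x).2.1 _) _ (x.2.1 _)
        _ ≤ ∑' k, ε (k + (n + m)) := hρ'd x (n + m)
    exact tendsto_nhds_unique h1 h2
  have hinv1 : ∀ x, σ (ρ x) = x := key_inv f f' hf (hlip f hfl) ρ σ hσt hρd
  have hinv2 : ∀ y, ρ (σ y) = y := key_inv f' f hf' (hlip f' hf'l) σ ρ hρt hσd
  refine ⟨{ toFun := ρ, invFun := σ, left_inv := hinv1, right_inv := hinv2,
            continuous_toFun := hρc, continuous_invFun := hσc }, ?_⟩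
  intro x y a b ha hb hab hmem
  exact hρa x y ⟨_, hmem⟩ a b ha hb hab rfl
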